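/- Let h(η) = 1/(1+e^{-η}) and U ~ N_q(0, Σ), and for each κ ∈ R let a(κ) be the unique adjustment with E[h(κ + d^TU + a(κ))] = h(κ). Then a(κ) → (1/2) d^TΣd as κ → +∞ and a(κ) → -(1/2) d^TΣd as κ → -∞. -/

import Mathlib

open MeasureTheory ProbabilityTheory Real Matrix Filter

/-- The inverse logit function `h(η) = 1/(1+e^{-η})`. -/
noncomputable def invLogit (η : ℝ) : ℝ := (1 + Real.exp (-η))⁻¹

open scoped NNReal ENNReal

namespace LogitAux

lemma denom_pos (η : ℝ) : 0 < 1 + Real.exp (-η) := by positivity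

lemma invLogit_pos (η : ℝ) : 0 < invLogit η := inv_pos.2 (denom_pos η)

lemma invLogit_lt_one (η : ℝ) : invLogit η < 1 := by
  rw [invLogit]
  rw [inv_lt_one₀ (denom_pos η)]
  linarith [Real.exp_pos (-η)]

lemma invLogit_mono : Monotone invLogit := by
  intro x y h
  rw [invLogit, invLogit]
  gcongr


lemma continuous_invLogit : Continuous invLogit :=
  Continuous.inv₀ (continuous_const.add (Real.continuous_exp.comp continuous_neg))
    fun η => (denom_pos η).ne'

lemma one_sub_invLogit (η : ℝ) : 1 - invLogit η = Real.exp (-η) * invLogit η := by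
  rw [invLogit]
  have h := (denom_pos η).ne'
  field_simp
  ring

lemma invLogit_neg (η : ℝ) : invLogit (-η) = 1 - invLogit η := by
  rw [invLogit, invLogit, neg_neg, Real.exp_neg]
  have h1 := Real.exp_pos η
  field_simp
  ring

lemma tendsto_invLogit_atTop : Tendsto invLogit atTop (nhds 1) := by
  have h : Tendsto (fun η : ℝ => 1 + Real.exp (-η)) atTop (nhds (1 + 0)) :=
    tendsto_const_nhds.add (Real.tendsto_exp_atBot.comp tendsto_neg_atTop_atBot)
  have := h.inv₀ (by norm_num)
  exact (by simpa using this : Tendsto (fun x : ℝ => (1 + Real.exp (-x))⁻¹) atTop (nhds 1))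

lemma norm_exp_mul_invLogit (x y : ℝ) : ‖Real.exp x * invLogit y‖ ≤ Real.exp x := by
  rw [Real.norm_eq_abs, abs_of_pos (mul_pos (Real.exp_pos x) (invLogit_pos y))]
  nth_rewrite 2 [← mul_one (Real.exp x)]
  exact mul_le_mul_of_nonneg_left (invLogit_lt_one _).le (Real.exp_pos _).le

lemma aesm_invLogit (ν : Measure ℝ) (b c : ℝ) :
    AEStronglyMeasurable (fun v => invLogit (b + v + c)) ν :=
  (continuous_invLogit.comp ((continuous_const.add continuous_id).add
    continuous_const)).aestronglyMeasurable

lemma integrable_invLogit (ν : Measure ℝ) [IsProbabilityMeasure ν] (b c : ℝ) :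
    Integrable (fun v => invLogit (b + v + c)) ν := by
  refine (integrable_const (1 : ℝ)).mono' (aesm_invLogit ν b c) (ae_of_all _ fun v => ?_)
  rw [Real.norm_eq_abs, abs_of_pos (invLogit_pos _)]
  exact (invLogit_lt_one _).le

lemma key (ν : Measure ℝ) [IsProbabilityMeasure ν]
    (hint : Integrable (fun v => Real.exp (-v)) ν) (s : ℝ)
    (hm : (∫ v, Real.exp (-v) ∂ν) = Real.exp s)
    (a : ℝ → ℝ)
    (ha : ∀ κ : ℝ, (∫ v, invLogit (κ + v + a κ) ∂ν) = invLogit κ) :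
    Tendsto a atTop (nhds s) := by
  -- integrability of exp(-(v+c))
  have Iexp : ∀ c : ℝ, Integrable (fun v => Real.exp (-(v + c))) ν := by
    intro c
    have h := hint.mul_const (Real.exp (-c))
    refine h.congr (ae_of_all _ fun v => ?_)
    show Real.exp (-v) * Real.exp (-c) = Real.exp (-(v + c))
    rw [← Real.exp_add]; congr 1; ring
  have IexpInv : ∀ κ c : ℝ, Integrable
      (fun v => Real.exp (-(v + c)) * invLogit (κ + v + c)) ν := by
    intro κ c
    refine (Iexp c).mono' (((Real.continuous_exp.comp
      ((continuous_id.add continuous_const).neg)).mul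
      (continuous_invLogit.comp ((continuous_const.add continuous_id).add
        continuous_const))).aestronglyMeasurable) (ae_of_all _ fun v => ?_)
    simpa using norm_exp_mul_invLogit (-(v + c)) (κ + v + c)
  set Φ : ℝ → ℝ → ℝ := fun c κ =>
    invLogit κ - ∫ v, Real.exp (-(v + c)) * invLogit (κ + v + c) ∂ν with hΦ
  -- identity
  have hid : ∀ c κ : ℝ, (∫ v, invLogit (κ + v + c) ∂ν) - invLogit κ
      = Real.exp (-κ) * Φ c κ := by
    intro c κ
    have h1 : (∫ v, invLogit (κ + v + c) ∂ν)
        = 1 - Real.exp (-κ) * ∫ v, Real.exp (-(v + c)) * invLogit (κ + v + c) ∂ν := by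
      have hpt : ∀ v : ℝ, invLogit (κ + v + c)
          = 1 - Real.exp (-κ) * (Real.exp (-(v + c)) * invLogit (κ + v + c)) := by
        intro v
        have h2 := one_sub_invLogit (κ + v + c)
        rw [← mul_assoc, ← Real.exp_add, show -κ + -(v + c) = -(κ + v + c) by ring]
        linarith
      calc (∫ v, invLogit (κ + v + c) ∂ν)
          = ∫ v, (1 - Real.exp (-κ) * (Real.exp (-(v + c)) * invLogit (κ + v + c))) ∂ν :=
            integral_congr_ae (ae_of_all _ hpt)
        _ = (∫ _, (1:ℝ) ∂ν) - ∫ v, Real.exp (-κ) * (Real.exp (-(v + c)) * invLogit (κ + v + c)) ∂ν :=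
            integral_sub (integrable_const 1) ((IexpInv κ c).const_mul _)
        _ = 1 - Real.exp (-κ) * ∫ v, Real.exp (-(v + c)) * invLogit (κ + v + c) ∂ν := by
            rw [integral_const, integral_const_mul]; simp
    rw [h1, hΦ]
    have h2 := one_sub_invLogit κ
    beta_reduce
    linear_combination h2
  -- limit of Φ c
  have hΦlim : ∀ c : ℝ, Tendsto (Φ c) atTop (nhds (1 - Real.exp (s - c))) := by
    intro c
    have hB : Tendsto (fun κ => ∫ v, Real.exp (-(v + c)) * invLogit (κ + v + c) ∂ν)
        atTop (nhds (∫ v, Real.exp (-(v + c)) ∂ν)) := by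
      refine tendsto_integral_filter_of_dominated_convergence (fun v => Real.exp (-(v + c)))
        (Eventually.of_forall fun κ => (IexpInv κ c).1) ?_ (Iexp c) (ae_of_all _ fun v => ?_)
      · refine Eventually.of_forall fun κ => ae_of_all _ fun v => ?_
        simpa using norm_exp_mul_invLogit (-(v + c)) (κ + v + c)
      · have h3 : Tendsto (fun κ : ℝ => κ + v + c) atTop atTop :=
          tendsto_atTop_add_const_right _ c (tendsto_atTop_add_const_right _ v tendsto_id)
        have := (tendsto_invLogit_atTop.comp h3).const_mul (Real.exp (-(v + c)))
        simpa using this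
    have hval : (∫ v, Real.exp (-(v + c)) ∂ν) = Real.exp (s - c) := by
      have : (∫ v, Real.exp (-(v + c)) ∂ν) = (∫ v, Real.exp (-v) * Real.exp (-c) ∂ν) :=
        integral_congr_ae (ae_of_all _ fun v =>
          show Real.exp (-(v + c)) = Real.exp (-v) * Real.exp (-c) by
            rw [← Real.exp_add]; congr 1; ring)
      rw [this, integral_mul_const, hm, ← Real.exp_add, sub_eq_add_neg]
    rw [hval] at hB
    have hA : Tendsto (fun κ : ℝ => invLogit κ) atTop (nhds 1) := tendsto_invLogit_atTop
    simpa [hΦ] using hA.sub hB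
  -- conclude
  rw [Metric.tendsto_atTop]
  intro ε hε
  have hup : ∀ᶠ κ : ℝ in atTop, 0 < Φ (s + ε) κ := by
    refine (hΦlim (s + ε)).eventually (eventually_gt_nhds ?_)
    have : Real.exp (s - (s + ε)) < 1 := by
      rw [Real.exp_lt_one_iff]; linarith
    linarith
  have hlo : ∀ᶠ κ : ℝ in atTop, Φ (s - ε) κ < 0 := by
    refine (hΦlim (s - ε)).eventually (eventually_lt_nhds ?_)
    have : 1 < Real.exp (s - (s - ε)) := by
      rw [show s - (s - ε) = ε by ring, Real.one_lt_exp_iff]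
      exact hε
    linarith
  rw [eventually_atTop] at hup hlo
  obtain ⟨K1, hK1⟩ := hup
  obtain ⟨K2, hK2⟩ := hlo
  refine ⟨max K1 K2, fun κ hκ => ?_⟩
  have h1 := hK1 κ (le_trans (le_max_left _ _) hκ)
  have h2 := hK2 κ (le_trans (le_max_right _ _) hκ)
  have hub : a κ < s + ε := by
    by_contra hcon
    push_neg at hcon
    have hmono : (∫ v, invLogit (κ + v + (s + ε)) ∂ν) ≤ ∫ v, invLogit (κ + v + a κ) ∂ν :=
      integral_mono (integrable_invLogit ν κ (s + ε)) (integrable_invLogit ν κ (a κ))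
        fun v => invLogit_mono (by linarith)
    rw [ha κ] at hmono
    have := hid (s + ε) κ
    nlinarith [Real.exp_pos (-κ)]
  have hlb : s - ε < a κ := by
    by_contra hcon
    push_neg at hcon
    have hmono : (∫ v, invLogit (κ + v + a κ) ∂ν) ≤ ∫ v, invLogit (κ + v + (s - ε)) ∂ν :=
      integral_mono (integrable_invLogit ν κ (a κ)) (integrable_invLogit ν κ (s - ε))
        fun v => invLogit_mono (by linarith)
    rw [ha κ] at hmono
    have := hid (s - ε) κ
    nlinarith [Real.exp_pos (-κ)]
  rw [Real.dist_eq, abs_sub_lt_iff]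
  constructor <;> linarith
lemma gauss_exp_neg (t : ℝ≥0) :
    Integrable (fun x => Real.exp (-x)) (gaussianReal 0 t) ∧
      (∫ x, Real.exp (-x) ∂(gaussianReal 0 t)) = Real.exp ((t : ℝ) / 2) := by
  by_cases ht : t = 0
  · subst ht
    rw [gaussianReal_zero_var]
    refine ⟨⟨(Real.continuous_exp.comp continuous_neg).aestronglyMeasurable, ?_⟩, ?_⟩
    · simp [HasFiniteIntegral, lintegral_dirac]
    rw [integral_dirac]
    norm_num
  · have htpos : (0:ℝ) < (t:ℝ) := lt_of_le_of_ne t.coe_nonneg (Ne.symm (NNReal.coe_ne_zero.mpr ht))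
    have hpt : ∀ x : ℝ, gaussianPDFReal 0 t x * Real.exp (-x)
        = Real.exp ((t:ℝ) / 2) * gaussianPDFReal (-(t:ℝ)) t x := by
      intro x
      rw [gaussianPDFReal, gaussianPDFReal]
      have h1 : Real.exp (-(x - 0)^2 / (2 * (t:ℝ))) * Real.exp (-x)
          = Real.exp ((t:ℝ) / 2) * Real.exp (-(x - -(t:ℝ))^2 / (2 * (t:ℝ))) := by
        rw [← Real.exp_add, ← Real.exp_add]
        congr 1
        field_simp
        ring
      rw [mul_assoc, h1]
      ring
    set p : ℝ → ℝ≥0 := fun x => (gaussianPDFReal 0 t x).toNNReal with hp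
    have hpm : Measurable p := (measurable_gaussianPDFReal 0 t).real_toNNReal
    have hdens : gaussianReal 0 t = volume.withDensity (fun x => (p x : ℝ≥0∞)) := by
      rw [gaussianReal_of_var_ne_zero 0 ht]
      rfl
    have hsmul : ∀ x : ℝ, p x • Real.exp (-x)
        = Real.exp ((t:ℝ) / 2) * gaussianPDFReal (-(t:ℝ)) t x := by
      intro x
      rw [NNReal.smul_def, smul_eq_mul, hp]
      rw [Real.coe_toNNReal _ (gaussianPDFReal_nonneg 0 t x)]
      exact hpt x
    constructor
    · rw [hdens, integrable_withDensity_iff_integrable_smul hpm]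
      refine ((integrable_gaussianPDFReal (-(t:ℝ)) t).const_mul
        (Real.exp ((t:ℝ)/2))).congr (ae_of_all _ fun x => (hsmul x).symm)
    · rw [hdens, integral_withDensity_eq_integral_smul hpm]
      calc (∫ x, p x • Real.exp (-x)) = ∫ x, Real.exp ((t:ℝ)/2) * gaussianPDFReal (-(t:ℝ)) t x :=
            integral_congr_ae (ae_of_all _ hsmul)
        _ = Real.exp ((t:ℝ)/2) * ∫ x, gaussianPDFReal (-(t:ℝ)) t x := integral_const_mul _ _
        _ = Real.exp ((t:ℝ)/2) := by rw [integral_gaussianPDFReal_eq_one _ ht, mul_one]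

end LogitAux

open LogitAux

/-- For a logit link with `U ~ N_q(0, Σ)` (characterized via Cramér–Wold),
the adjustment `a(κ)` satisfying `E[h(κ + dᵀU + a(κ))] = h(κ)` converges to
`(1/2) dᵀΣd` as `κ → +∞` and to `-(1/2) dᵀΣd` as `κ → -∞`. -/
theorem logit_adjustment_limit {q : ℕ} (S : Matrix (Fin q) (Fin q) ℝ)
    (hS : S.PosSemidef) (d : Fin q → ℝ) (μ : Measure (Fin q → ℝ))
    [IsProbabilityMeasure μ]
    (hU : ∀ c : Fin q → ℝ,
      μ.map (fun u => ∑ i, c i * u i) = gaussianReal 0 (c ⬝ᵥ S *ᵥ c).toNNReal)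
    (a : ℝ → ℝ)
    (ha : ∀ κ : ℝ, (∫ u, invLogit (κ + (∑ i, d i * u i) + a κ) ∂μ) = invLogit κ) :
    Tendsto a atTop (nhds ((d ⬝ᵥ S *ᵥ d) / 2)) ∧
      Tendsto a atBot (nhds (-((d ⬝ᵥ S *ᵥ d) / 2))) := by
  have hnn : 0 ≤ d ⬝ᵥ S *ᵥ d := by simpa using hS.dotProduct_mulVec_nonneg d
  set τ : ℝ := d ⬝ᵥ S *ᵥ d with hτ
  have hcoe : ((τ.toNNReal : ℝ≥0) : ℝ) = τ := Real.coe_toNNReal _ hnn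
  have hint := (gauss_exp_neg τ.toNNReal).1
  have hval : (∫ x, Real.exp (-x) ∂(gaussianReal 0 τ.toNNReal)) = Real.exp (τ / 2) := by
    rw [(gauss_exp_neg τ.toNNReal).2, hcoe]
  have hf : Measurable (fun u : Fin q → ℝ => ∑ i, d i * u i) :=
    Finset.measurable_sum _ fun i _ => by fun_prop
  have hf2 : Measurable (fun u : Fin q → ℝ => ∑ i, (-d) i * u i) :=
    Finset.measurable_sum _ fun i _ => by fun_prop
  have hgm : ∀ (ν : Measure ℝ) (b c : ℝ),
      AEStronglyMeasurable (fun v : ℝ => invLogit (b + v + c)) ν :=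
    fun ν b c => (continuous_invLogit.comp ((continuous_const.add continuous_id).add
      continuous_const)).aestronglyMeasurable
  -- atTop
  have part1 : Tendsto a atTop (nhds (τ / 2)) := by
    refine key (gaussianReal 0 τ.toNNReal) hint (τ / 2) hval a fun κ => ?_
    rw [← hU d, integral_map hf.aemeasurable (hgm _ κ (a κ))]
    exact ha κ
  -- atBot
  have hτ2 : ((-d) ⬝ᵥ S *ᵥ (-d)) = τ := by
    rw [hτ]
    simp [neg_dotProduct, Matrix.mulVec_neg, dotProduct_neg]
  have hU2 : μ.map (fun u => ∑ i, (-d) i * u i) = gaussianReal 0 τ.toNNReal := by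
    rw [hU (-d), hτ2]
  have hIμ : ∀ b c : ℝ, Integrable (fun u => invLogit (b + (∑ i, d i * u i) + c)) μ := by
    intro b c
    refine (integrable_const (1:ℝ)).mono' ((continuous_invLogit.measurable.comp
      ((measurable_const.add hf).add measurable_const)).aestronglyMeasurable)
      (ae_of_all _ fun u => ?_)
    rw [Real.norm_eq_abs, abs_of_pos (invLogit_pos _)]
    exact (invLogit_lt_one _).le
  set a' : ℝ → ℝ := fun κ => -a (-κ) with ha'
  have ha2 : ∀ κ : ℝ, (∫ u, invLogit (κ + (∑ i, (-d) i * u i) + a' κ) ∂μ) = invLogit κ := by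
    intro κ
    have h1 : ∀ u : Fin q → ℝ, invLogit (κ + (∑ i, (-d) i * u i) + a' κ)
        = 1 - invLogit ((-κ) + (∑ i, d i * u i) + a (-κ)) := by
      intro u
      rw [← invLogit_neg]
      congr 1
      have hsum : (∑ i, (-d) i * u i) = -∑ i, d i * u i := by
        simp [neg_mul]
      rw [hsum, ha']
      ring
    calc (∫ u, invLogit (κ + (∑ i, (-d) i * u i) + a' κ) ∂μ)
        = ∫ u, (1 - invLogit ((-κ) + (∑ i, d i * u i) + a (-κ))) ∂μ :=
          integral_congr_ae (ae_of_all _ h1)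
      _ = 1 - ∫ u, invLogit ((-κ) + (∑ i, d i * u i) + a (-κ)) ∂μ := by
          rw [integral_sub (integrable_const 1) (hIμ _ _), integral_const]
          simp
      _ = 1 - invLogit (-κ) := by rw [ha (-κ)]
      _ = invLogit κ := by rw [← invLogit_neg, neg_neg]
  have part2' : Tendsto a' atTop (nhds (τ / 2)) := by
    refine key (gaussianReal 0 τ.toNNReal) hint (τ / 2) hval a' fun κ => ?_
    rw [← hU2, integral_map hf2.aemeasurable (hgm _ κ (a' κ))]
    exact ha2 κ
  have part2 : Tendsto a atBot (nhds (-(τ / 2))) := by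
    have h := (part2'.comp tendsto_neg_atBot_atTop).neg
    refine h.congr fun κ => ?_
    show -(a' (-κ)) = a κ
    rw [ha']
    simp
  exact ⟨part1, part2⟩
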